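/- Let Q ∈ ℝ[t] have at least one irrational non-constant coefficient, and let p ∈ ℤ[t] with deg(p) ≥ 2. Then the composition Q ∘ p has at least one irrational non-constant coefficient. -/

import Mathlib

open Polynomial

/-- If `Q ∈ ℝ[t]` has at least one irrational non-constant coefficient and `p ∈ ℤ[t]` has
`deg p ≥ 2`, then `Q ∘ p` has at least one irrational non-constant coefficient. -/
theorem stmt1 (Q : ℝ[X]) (p : ℤ[X]) (hQ : ∃ j, 1 ≤ j ∧ Irrational (Q.coeff j))
    (hp : 2 ≤ p.natDegree) :
    ∃ j, 1 ≤ j ∧ Irrational ((Q.comp (p.map (Int.castRingHom ℝ))).coeff j) := by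
  classical
  obtain ⟨j₀, hj₀1, hj₀irr⟩ := hQ
  set f : ℝ[X] := p.map (Int.castRingHom ℝ) with hfdef
  have hfcoeff : ∀ k, f.coeff k = ((p.coeff k : ℤ) : ℝ) := fun k => coeff_map _ _
  have hfdeg : f.natDegree = p.natDegree :=
    natDegree_map_eq_of_injective (RingHom.injective_int _) p
  -- the set of indices with irrational coefficient
  set S : Finset ℕ := (Finset.range (Q.natDegree + 1)).filter
    (fun i => Irrational (Q.coeff i)) with hSdef
  have hmemS : ∀ i, i ∈ S ↔ Irrational (Q.coeff i) := by
    intro i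
    constructor
    · intro hi
      exact (Finset.mem_filter.mp hi).2
    · intro hi
      refine Finset.mem_filter.mpr ⟨Finset.mem_range.mpr ?_, hi⟩
      have : Q.coeff i ≠ 0 := by
        intro h
        rw [h] at hi
        exact hi ⟨0, by norm_num⟩
      exact Nat.lt_succ_of_le (le_natDegree_of_ne_zero this)
  have hS : S.Nonempty := ⟨j₀, (hmemS j₀).mpr hj₀irr⟩
  set j := S.max' hS with hjdef
  have hjirr : Irrational (Q.coeff j) := (hmemS j).mp (S.max'_mem hS)
  have hj1 : 1 ≤ j := le_trans hj₀1 (S.le_max' j₀ ((hmemS j₀).mpr hj₀irr))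
  have hjmax : ∀ i, j < i → ¬ Irrational (Q.coeff i) := by
    intro i hij hirr
    exact absurd (S.le_max' i ((hmemS i).mpr hirr)) (not_le.mpr hij)
  set n := j * p.natDegree with hndef
  refine ⟨n, ?_, ?_⟩
  · calc 1 ≤ 1 * 2 := by norm_num
      _ ≤ j * p.natDegree := Nat.mul_le_mul hj1 hp
  -- compute the coefficient
  have hcomp : (Q.comp f).coeff n = ∑ i ∈ Q.support, Q.coeff i * (f ^ i).coeff n := by
    rw [comp_eq_sum_left, Polynomial.sum, finset_sum_coeff]
    refine Finset.sum_congr rfl fun i _ => ?_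
    rw [coeff_C_mul]
  have hjsupp : j ∈ Q.support := mem_support_iff.mpr (fun h => by
    rw [h] at hjirr; exact hjirr ⟨0, by norm_num⟩)
  have hsplit : (Q.comp f).coeff n
      = Q.coeff j * (f ^ j).coeff n + ∑ i ∈ Q.support.erase j, Q.coeff i * (f ^ i).coeff n := by
    rw [hcomp, ← Finset.add_sum_erase _ _ hjsupp]
  -- the leading term
  have hlead : (f ^ j).coeff n = ((p.leadingCoeff ^ j : ℤ) : ℝ) := by
    have : (f ^ j).coeff (j * f.natDegree) = f.leadingCoeff ^ j :=
      coeff_pow_mul_natDegree f j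
    rw [hfdeg] at this
    rw [hndef, this]
    rw [leadingCoeff, hfdeg, hfcoeff, leadingCoeff]
    push_cast
    rfl
  have hlcne : p.leadingCoeff ^ j ≠ 0 := by
    have : p ≠ 0 := fun h => by simp [h] at hp
    exact pow_ne_zero _ (leadingCoeff_ne_zero.mpr this)
  have hmain : Irrational (Q.coeff j * (f ^ j).coeff n) := by
    rw [hlead]
    exact hjirr.mul_intCast hlcne
  -- the rest is rational
  have hrest : ∃ q : ℚ, (∑ i ∈ Q.support.erase j, Q.coeff i * (f ^ i).coeff n) = (q : ℝ) := by
    have hmem : (∑ i ∈ Q.support.erase j, Q.coeff i * (f ^ i).coeff n)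
        ∈ (Rat.castHom ℝ).range := by
      refine Subring.sum_mem _ fun i hi => ?_
      rcases lt_or_gt_of_ne (Finset.ne_of_mem_erase hi) with hij | hij
      · -- i < j : the coefficient of f ^ i at n vanishes
        have hz : (f ^ i).coeff n = 0 := by
          refine coeff_eq_zero_of_natDegree_lt ?_
          calc (f ^ i).natDegree ≤ i * f.natDegree := natDegree_pow_le
            _ < j * p.natDegree := by
                rw [hfdeg]
                have hpd : 0 < p.natDegree := by omega
                exact Nat.mul_lt_mul_of_lt_of_le hij le_rfl hpd
        rw [hz, mul_zero]
        exact Subring.zero_mem _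
      · -- i > j : Q.coeff i is rational, and the other factor is an integer
        have h1 : ¬ Irrational (Q.coeff i) := hjmax i hij
        rw [Irrational, not_not] at h1
        obtain ⟨q, hq⟩ := h1
        have h2 : (f ^ i).coeff n = (((p ^ i).coeff n : ℤ) : ℝ) := by
          have : f ^ i = (p ^ i).map (Int.castRingHom ℝ) := by
            rw [hfdef, Polynomial.map_pow]
          rw [this, coeff_map]
          rfl
        rw [h2, ← hq]
        exact Subring.mul_mem _ ⟨q, rfl⟩ ⟨((p ^ i).coeff n : ℚ), by norm_num⟩
    obtain ⟨q, hq⟩ := hmem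
    exact ⟨q, hq.symm⟩
  obtain ⟨q, hq⟩ := hrest
  rw [hsplit, hq]
  exact hmain.add_ratCast q
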